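/- The Ramsey number R(3,4) equals 9: every 2-coloring of the edges of K₉ into colors 1 and 2 contains a triangle in color 1 or a 4-clique in color 2, and there exists such a coloring of K₈ with neither. -/

import Mathlib

open SimpleGraph

/-- A clique of `G` all of whose edges receive color `i`. -/
def MonoClique {V : Type*} (G : SimpleGraph V) (c : Sym2 V → Fin 2) (i : Fin 2)
    (n : ℕ) (s : Finset V) : Prop :=
  G.IsNClique n s ∧ ∀ x ∈ s, ∀ y ∈ s, x ≠ y → c s(x, y) = i

open Finset

lemma fin2_ne {a i : Fin 2} (h : a ≠ i) : a = (if i = 0 then 1 else 0) := by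
  fin_cases a <;> fin_cases i <;> simp_all

lemma istop {V : Type*} (s : Finset V) (n : ℕ) (h : s.card = n) :
    (⊤ : SimpleGraph V).IsNClique n s :=
  ⟨fun x _ y _ hxy => by simpa using hxy, h⟩

lemma csym {V : Type*} (c : Sym2 V → Fin 2) (a b : V) : c s(a,b) = c s(b,a) := by
  rw [Sym2.eq_swap]

/-- R(3,3) ≤ 6 : any 6-set contains a monochromatic triangle. -/
lemma R33 (c : Sym2 (Fin 9) → Fin 2) (s : Finset (Fin 9)) (hs : s.card = 6) :
    ∃ i : Fin 2, ∃ t ⊆ s, t.card = 3 ∧ ∀ x ∈ t, ∀ y ∈ t, x ≠ y → c s(x,y) = i := by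
  obtain ⟨v, hv⟩ := Finset.card_pos.mp (by omega : 0 < s.card)
  set s' := s.erase v with hs'def
  have hs' : s'.card = 5 := by rw [hs'def, Finset.card_erase_of_mem hv, hs]
  have hsplit := Finset.card_filter_add_card_filter_not
    (s := s') (p := fun u => c s(v,u) = 0)
  obtain ⟨i, hbig⟩ : ∃ i : Fin 2, 3 ≤ (s'.filter (fun u => c s(v,u) = i)).card := by
    by_cases h : 3 ≤ (s'.filter (fun u => c s(v,u) = 0)).card
    · exact ⟨0, h⟩
    · refine ⟨1, ?_⟩
      have : s'.filter (fun u => ¬ c s(v,u) = 0) = s'.filter (fun u => c s(v,u) = 1) := by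
        apply Finset.filter_congr
        intro u _
        constructor
        · intro hu; exact fin2_ne hu
        · intro hu h0; rw [hu] at h0; exact absurd h0 (by decide)
      rw [this] at hsplit
      omega
  obtain ⟨T, hTsub, hT3⟩ := Finset.exists_subset_card_eq hbig
  have hTcol : ∀ u ∈ T, c s(v,u) = i := fun u hu => (Finset.mem_filter.mp (hTsub hu)).2
  have hTs' : T ⊆ s' := hTsub.trans (Finset.filter_subset _ _)
  by_cases hpair : ∃ x ∈ T, ∃ y ∈ T, x ≠ y ∧ c s(x,y) = i
  · obtain ⟨x, hx, y, hy, hxy, hcxy⟩ := hpair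
    have hxv : x ≠ v := Finset.ne_of_mem_erase (hTs' hx)
    have hyv : y ≠ v := Finset.ne_of_mem_erase (hTs' hy)
    refine ⟨i, {v, x, y}, ?_, ?_, ?_⟩
    · intro a ha
      simp only [Finset.mem_insert, Finset.mem_singleton] at ha
      rcases ha with rfl|rfl|rfl
      · exact hv
      · exact Finset.mem_of_mem_erase (hTs' hx)
      · exact Finset.mem_of_mem_erase (hTs' hy)
    · rw [Finset.card_insert_of_notMem (by simp [hxv.symm, hyv.symm]),
        Finset.card_insert_of_notMem (by simp [hxy]), Finset.card_singleton]
    · intro a ha b hb hab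
      simp only [Finset.mem_insert, Finset.mem_singleton] at ha hb
      have h1 := hTcol x hx
      have h2 := hTcol y hy
      rcases ha with rfl|rfl|rfl <;> rcases hb with rfl|rfl|rfl <;>
        first
          | exact absurd rfl hab
          | assumption
          | (rw [Sym2.eq_swap]; assumption)
  · push_neg at hpair
    refine ⟨if i = 0 then 1 else 0, T, fun a ha => Finset.mem_of_mem_erase (hTs' ha),
      hT3, fun x hx y hy hxy => fin2_ne (hpair x hx y hy hxy)⟩

def redG (c : Sym2 (Fin 9) → Fin 2) : SimpleGraph (Fin 9) where
  Adj x y := x ≠ y ∧ c s(x,y) = 0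
  symm := by constructor; intro x y h; exact ⟨h.1.symm, by rw [Sym2.eq_swap]; exact h.2⟩
  loopless := by constructor; intro x h; exact h.1 rfl

instance (c : Sym2 (Fin 9) → Fin 2) : DecidableRel (redG c).Adj :=
  fun _ _ => instDecidableAnd

theorem upper (c : Sym2 (Fin 9) → Fin 2) :
    (∃ s, MonoClique (⊤ : SimpleGraph (Fin 9)) c 0 3 s) ∨
    (∃ s, MonoClique (⊤ : SimpleGraph (Fin 9)) c 1 4 s) := by
  by_contra h
  push_neg at h
  obtain ⟨h0, h1⟩ := h
  have hdeg : ∀ v : Fin 9, (redG c).degree v = 3 := by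
    intro v
    set Nr := (redG c).neighborFinset v with hNr
    have hNrmem : ∀ u, u ∈ Nr → v ≠ u ∧ c s(v,u) = 0 := by
      intro u hu
      rw [hNr, SimpleGraph.mem_neighborFinset] at hu
      exact hu
    set Nb := univ.filter (fun u : Fin 9 => v ≠ u ∧ c s(v,u) = 1) with hNb
    have hNbmem : ∀ u, u ∈ Nb → v ≠ u ∧ c s(v,u) = 1 := by
      intro u hu
      rw [hNb, Finset.mem_filter] at hu
      exact hu.2
    -- split
    have hsum : Nr.card + Nb.card = 8 := by
      have h8 : (univ.filter (fun u : Fin 9 => v ≠ u)).card = 8 := by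
        rw [Finset.filter_ne, Finset.card_erase_of_mem (mem_univ v)]
        simp
      have hsplit := Finset.card_filter_add_card_filter_not
        (s := univ.filter (fun u : Fin 9 => v ≠ u)) (p := fun u => c s(v,u) = 0)
      have e1 : (univ.filter (fun u : Fin 9 => v ≠ u)).filter (fun u => c s(v,u) = 0) = Nr := by
        rw [hNr, SimpleGraph.neighborFinset_eq_filter, Finset.filter_filter]
        rfl
      have e2 : (univ.filter (fun u : Fin 9 => v ≠ u)).filter (fun u => ¬ c s(v,u) = 0) = Nb := by
        rw [hNb, Finset.filter_filter]
        apply Finset.filter_congr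
        intro u _
        constructor
        · rintro ⟨h1', h2'⟩; exact ⟨h1', fin2_ne h2'⟩
        · rintro ⟨h1', h2'⟩; exact ⟨h1', by rw [h2']; decide⟩
      rw [e1, e2] at hsplit
      omega
    have hNrle : Nr.card ≤ 3 := by
      by_contra hcon
      obtain ⟨t, hts, ht4⟩ := Finset.exists_subset_card_eq (s := Nr) (n := 4) (by omega)
      apply h1 t
      refine ⟨istop t 4 ht4, fun x hx y hy hxy => ?_⟩
      by_contra hne
      have hxy0 : c s(x,y) = 0 := fin2_ne hne
      obtain ⟨hvx, hcvx⟩ := hNrmem x (hts hx)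
      obtain ⟨hvy, hcvy⟩ := hNrmem y (hts hy)
      apply h0 {v, x, y}
      refine ⟨istop _ 3 ?_, ?_⟩
      · rw [Finset.card_insert_of_notMem (by simp [hvx, hvy]),
          Finset.card_insert_of_notMem (by simp [hxy]), Finset.card_singleton]
      · intro a ha b hb hab
        simp only [Finset.mem_insert, Finset.mem_singleton] at ha hb
        rcases ha with rfl|rfl|rfl <;> rcases hb with rfl|rfl|rfl <;>
          first
            | exact absurd rfl hab
            | assumption
            | (rw [Sym2.eq_swap]; assumption)
    have hNble : Nb.card ≤ 5 := by
      by_contra hcon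
      obtain ⟨t, hts, ht6⟩ := Finset.exists_subset_card_eq (s := Nb) (n := 6) (by omega)
      obtain ⟨i, u, hus, hu3, humono⟩ := R33 c t ht6
      have huNb : ∀ x ∈ u, v ≠ x ∧ c s(v,x) = 1 := fun x hx => hNbmem x (hts (hus hx))
      have hvu : v ∉ u := fun hvu => (huNb v hvu).1 rfl
      fin_cases i
      · exact h0 u ⟨istop u 3 hu3, humono⟩
      · apply h1 (insert v u)
        refine ⟨istop _ 4 (by rw [Finset.card_insert_of_notMem hvu, hu3]), ?_⟩
        intro a ha b hb hab
        rcases Finset.mem_insert.mp ha with rfl|ha' <;>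
          rcases Finset.mem_insert.mp hb with rfl|hb'
        · exact absurd rfl hab
        · exact (huNb b hb').2
        · rw [Sym2.eq_swap]; exact (huNb a ha').2
        · exact humono a ha' b hb' hab
    have hdv : (redG c).degree v = Nr.card := by rw [hNr]; rfl
    omega
  have hsum := SimpleGraph.sum_degrees_eq_twice_card_edges (redG c)
  rw [Finset.sum_congr rfl (fun v _ => hdeg v), Finset.sum_const] at hsum
  simp at hsum
  omega

instance {V : Type*} [DecidableEq V] (G : SimpleGraph V) [DecidableRel G.Adj]
    (c : Sym2 V → Fin 2) (i : Fin 2) (n : ℕ) (s : Finset V) :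
    Decidable (MonoClique G c i n s) := by unfold MonoClique; infer_instance

def myc : Sym2 (Fin 8) → Fin 2 :=
  Sym2.lift ⟨fun x y => if (x - y).val = 1 ∨ (x - y).val = 4 ∨ (x - y).val = 7 then 0 else 1,
    by decide⟩

set_option maxRecDepth 10000 in
lemma lower : ¬ ((∃ s, MonoClique (⊤ : SimpleGraph (Fin 8)) myc 0 3 s) ∨
         (∃ s, MonoClique (⊤ : SimpleGraph (Fin 8)) myc 1 4 s)) := by decide

theorem stmt6 :
    (∀ c : Sym2 (Fin 9) → Fin 2,
      (∃ s, MonoClique (⊤ : SimpleGraph (Fin 9)) c 0 3 s) ∨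
      (∃ s, MonoClique (⊤ : SimpleGraph (Fin 9)) c 1 4 s)) ∧
    (∃ c : Sym2 (Fin 8) → Fin 2,
      ¬ ((∃ s, MonoClique (⊤ : SimpleGraph (Fin 8)) c 0 3 s) ∨
         (∃ s, MonoClique (⊤ : SimpleGraph (Fin 8)) c 1 4 s))) :=
  ⟨upper, myc, lower⟩
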